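/- arXiv:2101.07449 — 2 statements merged into one kernel-verified Lean document; each statement's English description precedes it below -/
import Mathlib

section
/- Let α = (1+√5)/2 and let F_n denote the Fibonacci numbers (F_1 = F_2 = 1). Then the absolutely convergent double series identity ∑_{m=1}^∞ ∑_{n=1}^∞ (α^{-m} F_m + α^{-n} F_n − α^{-(m+n)} F_{m+n}) / (m (m+n)^2) = ∑_{m=1}^∞ α^{-m} F_m / m^3 holds. -/
open scoped BigOperators

/-- The golden ratio `(1+√5)/2`. -/
noncomputable def goldenAlpha : ℝ := (1 + Real.sqrt 5) / 2

open Real Filter Finset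

namespace FibAux


noncomputable def H (n : ℕ) : ℝ := ∑ i ∈ Finset.range n, (1:ℝ)/(i+1)

lemma H_zero : H 0 = 0 := by simp [H]

lemma H_succ (n : ℕ) : H (n+1) = H n + 1/(n+1) := by
  simp [H, Finset.sum_range_succ]

lemma H_nonneg (n : ℕ) : 0 ≤ H n :=
  Finset.sum_nonneg (fun i _ => by positivity)

lemma H_mono (n : ℕ) : H n ≤ H (n+1) := by
  rw [H_succ]
  have h : 0 < (n:ℝ)+1 := by positivity
  have := one_div_pos.mpr h
  linarith

lemma H_le (n : ℕ) : H n ≤ 2 * Real.sqrt n := by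
  induction n with
  | zero => simp [H_zero]
  | succ n ih =>
    rw [H_succ]
    have h0 : (0:ℝ) ≤ (n:ℝ) := by positivity
    have h1 : (0:ℝ) ≤ (n:ℝ)+1 := by positivity
    have hs : Real.sqrt n ^ 2 = (n:ℝ) := Real.sq_sqrt h0
    have hs1 : Real.sqrt ((n:ℝ)+1) ^ 2 = (n:ℝ)+1 := Real.sq_sqrt h1
    have hn0 : (0:ℝ) ≤ Real.sqrt n := Real.sqrt_nonneg _
    have hn1 : (0:ℝ) ≤ Real.sqrt ((n:ℝ)+1) := Real.sqrt_nonneg _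
    have hone : (1:ℝ) ≤ Real.sqrt ((n:ℝ)+1) := by
      nlinarith
    have key : (1:ℝ)/(n+1) ≤ 2*(Real.sqrt ((n:ℝ)+1) - Real.sqrt n) := by
      rw [div_le_iff₀ (by positivity)]
      nlinarith [sq_nonneg (Real.sqrt ((n:ℝ)+1) - Real.sqrt n)]
    push_cast
    nlinarith

lemma tendsto_aux (j : ℕ) : Tendsto (fun N : ℕ => (1:ℝ)/(N+j+1)) atTop (nhds 0) := by
  have h : Tendsto (fun N : ℕ => ((N:ℝ)+j+1)) atTop atTop := by
    apply tendsto_atTop_add_const_right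
    apply tendsto_atTop_add_const_right
    exact tendsto_natCast_atTop_atTop
  simpa [one_div, Pi.inv_def] using h.inv_tendsto_atTop

lemma hasSum_teles (j : ℕ) :
    HasSum (fun n : ℕ => (1:ℝ)/(n+j+1) - 1/(n+j+2)) (1/(j+1)) := by
  have nn : ∀ n : ℕ, 0 ≤ (1:ℝ)/(n+j+1) - 1/(n+j+2) := by
    intro n
    have h1 : (0:ℝ) < (n:ℝ)+j+1 := by positivity
    have h2 : (0:ℝ) < (n:ℝ)+j+2 := by positivity
    have := one_div_le_one_div_of_le h1 (by linarith : (n:ℝ)+j+1 ≤ (n:ℝ)+j+2)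
    linarith
  rw [hasSum_iff_tendsto_nat_of_nonneg nn]
  have hps : ∀ N : ℕ, ∑ i ∈ Finset.range N, ((1:ℝ)/(i+j+1) - 1/(i+j+2))
      = 1/(j+1) - 1/(N+j+1) := by
    intro N
    have h := Finset.sum_range_sub' (fun i : ℕ => (1:ℝ)/(i+j+1)) N
    have e1 : ∑ i ∈ Finset.range N, ((1:ℝ)/(i+j+1) - 1/(i+j+2))
        = ∑ i ∈ Finset.range N, ((1:ℝ)/(i+j+1) - 1/((i+1:ℕ)+j+1)) := by
      apply Finset.sum_congr rfl
      intro i _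
      push_cast
      ring_nf
    rw [e1, h]
    push_cast
    ring_nf
  simp only [hps]
  have := (tendsto_aux j).const_sub ((1:ℝ)/(j+1))
  simpa using this



lemma hasSum_inner (m : ℕ) :
    HasSum (fun n : ℕ => (1:ℝ)/((n+1)*(n+m+2))) (H (m+1) / (m+1)) := by
  have hsum : HasSum (fun n : ℕ => ∑ j ∈ Finset.range (m+1), ((1:ℝ)/(n+j+1) - 1/(n+j+2)))
      (∑ j ∈ Finset.range (m+1), (1:ℝ)/(j+1)) :=
    hasSum_sum (fun j _ => hasSum_teles j)
  have key : ∀ n : ℕ, (1/(m+1)) * ∑ j ∈ Finset.range (m+1), ((1:ℝ)/(n+j+1) - 1/(n+j+2))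
      = (1:ℝ)/((n+1)*(n+m+2)) := by
    intro n
    have tel : ∑ j ∈ Finset.range (m+1), ((1:ℝ)/(n+j+1) - 1/(n+j+2))
        = 1/((n:ℝ)+1) - 1/((n:ℝ)+m+2) := by
      have h := Finset.sum_range_sub' (fun j : ℕ => (1:ℝ)/(n+j+1)) (m+1)
      have e1 : ∑ j ∈ Finset.range (m+1), ((1:ℝ)/(n+j+1) - 1/(n+j+2))
          = ∑ j ∈ Finset.range (m+1), ((1:ℝ)/(n+j+1) - 1/(n+(j+1:ℕ)+1)) := by
        apply Finset.sum_congr rfl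
        intro j _
        push_cast; ring_nf
      rw [e1, h]
      push_cast; ring_nf
    rw [tel]
    have h1 : (0:ℝ) < (n:ℝ)+1 := by positivity
    have h2 : (0:ℝ) < (n:ℝ)+m+2 := by positivity
    have h3 : (0:ℝ) < (m:ℝ)+1 := by positivity
    push_cast
    field_simp
    ring
  have := (hsum.mul_left ((1:ℝ)/(m+1)))
  simp only [key] at this
  have hval : (1/((m:ℝ)+1)) * ∑ j ∈ Finset.range (m+1), (1:ℝ)/(j+1) = H (m+1)/(m+1) := by
    rw [H]; ring
  rwa [hval] at this

lemma A_summable : Summable (fun n : ℕ => ((n:ℝ)+1) ^ (-(3/2) : ℝ)) := by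
  have h : Summable (fun n : ℕ => ((n:ℝ)) ^ (-(3/2) : ℝ)) :=
    Real.summable_nat_rpow.2 (by norm_num)
  have := (summable_nat_add_iff 1).2 h
  refine this.congr ?_
  intro n; push_cast; ring_nf

lemma sqrt_mul_le (a b : ℝ) (ha : 0 ≤ a) (hb : 0 ≤ b) : Real.sqrt (a*b) ≤ a + b := by
  rw [Real.sqrt_mul ha]
  nlinarith [sq_nonneg (Real.sqrt a - Real.sqrt b), Real.sq_sqrt ha, Real.sq_sqrt hb,
    Real.sqrt_nonneg a, Real.sqrt_nonneg b]

lemma M_bound (m n : ℕ) :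
    (1:ℝ)/(((m:ℝ)+1)*((n:ℝ)+1)*((m:ℝ)+n+2)) ≤ ((m:ℝ)+1)^(-(3/2):ℝ) * ((n:ℝ)+1)^(-(3/2):ℝ) := by
  have hm : (0:ℝ) < (m:ℝ)+1 := by positivity
  have hn : (0:ℝ) < (n:ℝ)+1 := by positivity
  set Y : ℝ := ((m:ℝ)+1)*((n:ℝ)+1) with hY
  have hYpos : 0 < Y := by positivity
  have hmul : ((m:ℝ)+1)^(-(3/2):ℝ) * ((n:ℝ)+1)^(-(3/2):ℝ) = Y ^ (-(3/2):ℝ) := by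
    rw [hY, Real.mul_rpow hm.le hn.le]
  rw [hmul, Real.rpow_neg hYpos.le, ← one_div]
  have hY32 : Y ^ ((3/2):ℝ) = Y * Real.sqrt Y := by
    rw [show ((3/2):ℝ) = 1 + 1/2 by norm_num, Real.rpow_add hYpos, Real.rpow_one,
      ← Real.sqrt_eq_rpow]
  rw [hY32]
  apply one_div_le_one_div_of_le (by positivity)
  have hsq : Real.sqrt Y ≤ ((m:ℝ)+1) + ((n:ℝ)+1) := sqrt_mul_le _ _ hm.le hn.le
  calc ((m:ℝ)+1)*((n:ℝ)+1)*((m:ℝ)+n+2) = Y * (((m:ℝ)+1) + ((n:ℝ)+1)) := by rw [hY]; ring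
    _ ≥ Y * Real.sqrt Y := by nlinarith [Real.sqrt_nonneg Y]

lemma M_summable : Summable (fun p : ℕ×ℕ => ((p.1:ℝ)+1)^(-(3/2):ℝ) * ((p.2:ℝ)+1)^(-(3/2):ℝ)) :=
  A_summable.mul_of_nonneg A_summable
    (fun n => Real.rpow_nonneg (by positivity) _)
    (fun n => Real.rpow_nonneg (by positivity) _)

lemma summable_dom {f : ℕ×ℕ → ℝ} (C : ℝ)
    (h : ∀ p : ℕ×ℕ, |f p| ≤ C * (1/(((p.1:ℝ)+1)*((p.2:ℝ)+1)*((p.1:ℝ)+p.2+2)))) :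
    Summable f := by
  apply Summable.of_abs
  have hC : 0 ≤ C := by
    have h0 := h (0,0)
    have : (0:ℝ) < 1/(((0:ℝ)+1)*((0:ℝ)+1)*((0:ℝ)+(0:ℕ)+2)) := by norm_num
    nlinarith [abs_nonneg (f (0,0)), h0]
  refine Summable.of_nonneg_of_le (fun p => abs_nonneg _) (fun p => ?_) (M_summable.mul_left C)
  refine (h p).trans ?_
  have hb := M_bound p.1 p.2
  nlinarith [hb, hC]


lemma rpow_32 (x : ℝ) (hx : 0 < x) : x ^ ((3/2):ℝ) = x * Real.sqrt x := by
  rw [show ((3/2):ℝ) = 1 + 1/2 by norm_num, Real.rpow_add hx, Real.rpow_one,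
    ← Real.sqrt_eq_rpow]

lemma abs_ypow_le {y : ℝ} (hy : |y| ≤ 1) (k : ℕ) : |y^k| ≤ 1 := by
  rw [abs_pow]; exact pow_le_one₀ (abs_nonneg _) hy

/-- one-dimensional summability workhorse -/
lemma summable_one_dim (y : ℝ) (hy : |y| ≤ 1) (w : ℕ → ℝ)
    (hw : ∀ k : ℕ, |w k| ≤ 2 * Real.sqrt ((k:ℝ)+1)) :
    Summable (fun k : ℕ => y^(k+1) * w k /((k:ℝ)+1)^2) := by
  apply Summable.of_abs
  refine Summable.of_nonneg_of_le (fun k => abs_nonneg _) (fun k => ?_)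
    (A_summable.mul_left 2)
  have hx : (0:ℝ) < (k:ℝ)+1 := by positivity
  have h32 : ((k:ℝ)+1) ^ ((3/2):ℝ) = ((k:ℝ)+1) * Real.sqrt ((k:ℝ)+1) := rpow_32 _ hx
  have hA : ((k:ℝ)+1) ^ (-(3/2):ℝ) = 1/(((k:ℝ)+1) * Real.sqrt ((k:ℝ)+1)) := by
    rw [Real.rpow_neg hx.le, h32, one_div]
  rw [hA]
  rw [abs_div, abs_mul, abs_pow, abs_pow, abs_of_pos hx]
  have h1 : |y^(k+1)| ≤ 1 := abs_ypow_le hy (k+1)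
  have hs : (0:ℝ) < Real.sqrt ((k:ℝ)+1) := Real.sqrt_pos.2 hx
  have hss : Real.sqrt ((k:ℝ)+1) * Real.sqrt ((k:ℝ)+1) = (k:ℝ)+1 :=
    Real.mul_self_sqrt hx.le
  rw [div_le_iff₀ (by positivity)]
  have habs : |y| ^ (k+1) * |w k| ≤ 1 * (2 * Real.sqrt ((k:ℝ)+1)) := by
    apply mul_le_mul
    · rw [← abs_pow]; exact h1
    · exact hw k
    · exact abs_nonneg _
    · norm_num
  calc |y| ^ (k+1) * |w k| ≤ 2 * Real.sqrt ((k:ℝ)+1) := by linarith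
    _ = 2 * (1/(((k:ℝ)+1) * Real.sqrt ((k:ℝ)+1))) * ((k:ℝ)+1)^2 := by
        field_simp
        nlinarith [hss]

lemma w_H (k : ℕ) : |H k| ≤ 2 * Real.sqrt ((k:ℝ)+1) := by
  rw [abs_of_nonneg (H_nonneg k)]
  refine (H_le k).trans ?_
  have : Real.sqrt (k:ℝ) ≤ Real.sqrt ((k:ℝ)+1) := Real.sqrt_le_sqrt (by linarith)
  linarith

lemma w_H' (k : ℕ) : |H (k+1)| ≤ 2 * Real.sqrt ((k:ℝ)+1) := by
  rw [abs_of_nonneg (H_nonneg _)]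
  have := H_le (k+1)
  push_cast at this
  exact this

lemma w_inv (k : ℕ) : |(1:ℝ)/((k:ℝ)+1)| ≤ 2 * Real.sqrt ((k:ℝ)+1) := by
  have hx : (0:ℝ) < (k:ℝ)+1 := by positivity
  have h1 : (1:ℝ)/((k:ℝ)+1) ≤ 1 := by
    rw [div_le_one hx]; linarith
  have h2 : (1:ℝ) ≤ Real.sqrt ((k:ℝ)+1) := by
    nlinarith [Real.sq_sqrt (show (0:ℝ) ≤ (k:ℝ)+1 by positivity),
      Real.sqrt_nonneg ((k:ℝ)+1)]
  rw [abs_of_pos (by positivity)]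
  linarith

/-- `P`: iterated sum computation. -/
lemma P_eq (y : ℝ) (hy : |y| ≤ 1)
    (hs : Summable (fun p : ℕ×ℕ => y^(p.1+1)/(((p.1:ℝ)+1)*((p.2:ℝ)+1)*((p.1:ℝ)+p.2+2)))) :
    ∑' p : ℕ×ℕ, y^(p.1+1)/(((p.1:ℝ)+1)*((p.2:ℝ)+1)*((p.1:ℝ)+p.2+2))
    = ∑' m : ℕ, y^(m+1) * H (m+1)/((m:ℝ)+1)^2 := by
  have inner : ∀ m : ℕ, HasSum (fun n : ℕ => y^(m+1)/(((m:ℝ)+1)*((n:ℝ)+1)*((m:ℝ)+n+2)))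
      (y^(m+1) * H (m+1)/((m:ℝ)+1)^2) := by
    intro m
    have h := (hasSum_inner m).mul_left (y^(m+1)/((m:ℝ)+1))
    have e : (fun n : ℕ => y^(m+1)/((m:ℝ)+1) * ((1:ℝ)/(((n:ℝ)+1)*((n:ℝ)+m+2))))
        = fun n : ℕ => y^(m+1)/(((m:ℝ)+1)*((n:ℝ)+1)*((m:ℝ)+n+2)) := by
      funext n
      have h1 : ((m:ℝ)+1) ≠ 0 := by positivity
      have h2 : ((n:ℝ)+1) ≠ 0 := by positivity
      have h3 : ((m:ℝ)+n+2) ≠ 0 := by positivity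
      rw [div_mul_div_comm, mul_one]
      congr 1
      ring
    rw [e] at h
    have ev : y^(m+1)/((m:ℝ)+1) * (H (m+1)/((m:ℝ)+1)) = y^(m+1) * H (m+1)/((m:ℝ)+1)^2 := by
      rw [div_mul_div_comm]
      congr 1
      ring
    rwa [ev] at h
  rw [Summable.tsum_prod' hs (fun m => (inner m).summable)]
  exact tsum_congr (fun m => (inner m).tsum_eq)

/-- the diagonal equiv -/
def diagEquiv : (Σ k : ℕ, Fin (k+1)) ≃ ℕ × ℕ where
  toFun x := (x.2.1, x.1 - x.2.1)
  invFun p := ⟨p.1 + p.2, ⟨p.1, by omega⟩⟩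
  left_inv := by
    rintro ⟨k, ⟨j, hj⟩⟩
    dsimp only
    have h : j + (k - j) = k := by omega
    refine Sigma.ext h ?_
    rw [Fin.heq_ext_iff (congrArg (· + 1) h)]
  right_inv := by
    rintro ⟨m, n⟩
    simp

/-- finite partial-fraction identity on the diagonal -/
lemma finsum_diag (k : ℕ) :
    ∑ j ∈ Finset.range (k+1), (1:ℝ)/(((j:ℝ)+1)*(((k-j:ℕ):ℝ)+1)) = 2 * H (k+1) / ((k:ℝ)+2) := by
  have step : ∀ j ∈ Finset.range (k+1),
      (1:ℝ)/(((j:ℝ)+1)*(((k-j:ℕ):ℝ)+1))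
      = (1/((k:ℝ)+2)) * ((1:ℝ)/((j:ℝ)+1) + (1:ℝ)/(((k-j:ℕ):ℝ)+1)) := by
    intro j hj
    have hj' : j ≤ k := Nat.lt_succ_iff.mp (Finset.mem_range.1 hj)
    have hc : ((k-j:ℕ):ℝ) = (k:ℝ) - j := by
      rw [Nat.cast_sub hj']
    have hjr : (j:ℝ) ≤ (k:ℝ) := by exact_mod_cast hj'
    rw [hc]
    have d1 : ((j:ℝ)+1) ≠ 0 := by positivity
    have d2 : ((k:ℝ)-j+1) ≠ 0 := by nlinarith
    have d3 : ((k:ℝ)+2) ≠ 0 := by positivity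
    field_simp
    ring
  rw [Finset.sum_congr rfl step, ← Finset.mul_sum, Finset.sum_add_distrib]
  have refl : ∑ j ∈ Finset.range (k+1), (1:ℝ)/(((k-j:ℕ):ℝ)+1)
      = ∑ j ∈ Finset.range (k+1), (1:ℝ)/((j:ℝ)+1) := by
    have h := Finset.sum_range_reflect (fun j : ℕ => (1:ℝ)/((j:ℝ)+1)) (k+1)
    simpa using h
  rw [refl]
  have hH : H (k+1) = ∑ j ∈ Finset.range (k+1), (1:ℝ)/((j:ℝ)+1) := rfl
  rw [← hH]
  ring


/-- `Q`: diagonal sum computation. -/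
lemma Q_eq (y : ℝ)
    (hs : Summable (fun p : ℕ×ℕ => y^(p.1+p.2+2)/(((p.1:ℝ)+1)*((p.2:ℝ)+1)*((p.1:ℝ)+p.2+2)))) :
    ∑' p : ℕ×ℕ, y^(p.1+p.2+2)/(((p.1:ℝ)+1)*((p.2:ℝ)+1)*((p.1:ℝ)+p.2+2))
    = 2 * ∑' k : ℕ, y^(k+2) * H (k+1) / ((k:ℝ)+2)^2 := by
  set q : ℕ×ℕ → ℝ := fun p => y^(p.1+p.2+2)/(((p.1:ℝ)+1)*((p.2:ℝ)+1)*((p.1:ℝ)+p.2+2)) with hq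
  have hqe : Summable (q ∘ diagEquiv) := (diagEquiv.summable_iff).2 hs
  rw [← diagEquiv.tsum_eq q]
  have : ∑' (x : Σ k : ℕ, Fin (k+1)), q (diagEquiv x)
      = ∑' (k : ℕ), ∑' (j : Fin (k+1)), q (diagEquiv ⟨k, j⟩) := Summable.tsum_sigma hqe
  rw [this]
  have inner : ∀ k : ℕ, ∑' (j : Fin (k+1)), q (diagEquiv ⟨k, j⟩)
      = 2 * (y^(k+2) * H (k+1) / ((k:ℝ)+2)^2) := by
    intro k
    rw [tsum_fintype]
    have e1 : ∑ j : Fin (k+1), q (diagEquiv ⟨k, j⟩)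
        = ∑ j ∈ Finset.range (k+1), q (j, k - j) := by
      exact Fin.sum_univ_eq_sum_range (fun j => q (j, k - j)) (k+1)
    rw [e1]
    have e2 : ∀ j ∈ Finset.range (k+1), q (j, k - j)
        = (y^(k+2)/((k:ℝ)+2)) * ((1:ℝ)/(((j:ℝ)+1)*(((k-j:ℕ):ℝ)+1))) := by
      intro j hj
      have hj' : j ≤ k := Nat.lt_succ_iff.mp (Finset.mem_range.1 hj)
      have hexp : j + (k - j) + 2 = k + 2 := by omega
      have hcast : ((j:ℝ)) + ((k-j:ℕ):ℝ) + 2 = (k:ℝ) + 2 := by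
        rw [Nat.cast_sub hj']
        ring
      simp only [hq]
      rw [hexp, hcast]
      have d1 : ((j:ℝ)+1) ≠ 0 := by positivity
      have d2 : (((k-j:ℕ):ℝ)+1) ≠ 0 := by positivity
      have d3 : ((k:ℝ)+2) ≠ 0 := by positivity
      field_simp
    rw [Finset.sum_congr rfl e2, ← Finset.mul_sum, finsum_diag k]
    have d3 : ((k:ℝ)+2) ≠ 0 := by positivity
    field_simp
  rw [tsum_congr inner, tsum_mul_left]

lemma shift_eq (y : ℝ) (hC : Summable (fun k : ℕ => y^(k+1) * H k /((k:ℝ)+1)^2)) :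
    ∑' k : ℕ, y^(k+2) * H (k+1) / ((k:ℝ)+2)^2
    = ∑' k : ℕ, y^(k+1) * H k /((k:ℝ)+1)^2 := by
  rw [Summable.tsum_eq_zero_add hC]
  simp only [H_zero, pow_one, mul_zero, zero_div, zero_add, Nat.cast_zero]
  norm_num
  apply tsum_congr
  intro k
  push_cast
  ring_nf

/-! ### Golden-ratio / Fibonacci facts -/

lemma alpha_eq : goldenAlpha = goldenRatio := rfl

noncomputable def yv : ℝ := -goldenConj^2

lemma yv_abs : |yv| ≤ 1 := by
  have h1 := neg_one_lt_goldenConj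
  have h2 := goldenConj_neg
  rw [yv, abs_le]
  constructor <;> nlinarith

lemma sqrt5_pos : (0:ℝ) < Real.sqrt 5 := Real.sqrt_pos.mpr (by norm_num)

lemma binet (n : ℕ) :
    goldenAlpha⁻¹ ^ n * (Nat.fib n : ℝ) = (1 - yv^n)/Real.sqrt 5 := by
  rw [alpha_eq, Real.coe_fib_eq]
  have h1 : goldenRatio⁻¹ * goldenRatio = 1 := inv_mul_cancel₀ goldenRatio_ne_zero
  have h2 : goldenRatio⁻¹ * goldenConj = yv := by
    rw [inv_goldenRatio, yv]
    ring
  calc goldenRatio⁻¹ ^ n * ((goldenRatio^n - goldenConj^n)/Real.sqrt 5)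
      = ((goldenRatio⁻¹ * goldenRatio)^n - (goldenRatio⁻¹ * goldenConj)^n)/Real.sqrt 5 := by
        rw [mul_pow, mul_pow]
        ring
    _ = (1 - yv^n)/Real.sqrt 5 := by rw [h1, h2, one_pow]


/-! ### Core summabilities and the main computation -/

section Core

lemma g_abs {y : ℝ} (hy : |y| ≤ 1) (k : ℕ) : |1 - y^k| ≤ 2 := by
  have h := abs_ypow_le hy k
  calc |1 - y^k| ≤ |(1:ℝ)| + |y^k| := abs_sub _ _
    _ ≤ 2 := by rw [abs_one]; linarith

lemma st_gen (C : ℝ) (w : ℕ×ℕ → ℝ) (hw : ∀ p, |w p| ≤ C) :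
    Summable (fun p : ℕ×ℕ => w p/(((p.1:ℝ)+1)*((p.2:ℝ)+1)*((p.1:ℝ)+p.2+2))) := by
  apply summable_dom C
  intro p
  have hd : (0:ℝ) < ((p.1:ℝ)+1)*((p.2:ℝ)+1)*((p.1:ℝ)+p.2+2) := by positivity
  rw [abs_div, abs_of_pos hd, mul_one_div]
  exact (div_le_div_iff_of_pos_right hd).mpr (hw p)

lemma su_summable {y : ℝ} (hy : |y| ≤ 1) :
    Summable (fun p : ℕ×ℕ =>
      (1-y^(p.1+1))*(1-y^(p.2+1))/(((p.1:ℝ)+1)*(((p.1:ℝ)+p.2+2))^2)) := by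
  apply summable_dom 4
  intro p
  have hd2 : (0:ℝ) < ((p.1:ℝ)+1)*(((p.1:ℝ)+p.2+2))^2 := by positivity
  have hd : (0:ℝ) < ((p.1:ℝ)+1)*((p.2:ℝ)+1)*((p.1:ℝ)+p.2+2) := by positivity
  rw [abs_div, abs_of_pos hd2, abs_mul]
  have h1 := g_abs hy (p.1+1)
  have h2 := g_abs hy (p.2+1)
  have hnum : |1-y^(p.1+1)| * |1-y^(p.2+1)| ≤ 4 := by
    nlinarith [abs_nonneg (1-y^(p.1+1)), abs_nonneg (1-y^(p.2+1))]
  have hden : ((p.1:ℝ)+1)*((p.2:ℝ)+1)*((p.1:ℝ)+p.2+2) ≤ ((p.1:ℝ)+1)*(((p.1:ℝ)+p.2+2))^2 := by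
    have : ((p.2:ℝ)+1) ≤ (p.1:ℝ)+p.2+2 := by
      have : (0:ℝ) ≤ (p.1:ℝ) := by positivity
      linarith
    nlinarith [this]
  calc |1-y^(p.1+1)| * |1-y^(p.2+1)| / (((p.1:ℝ)+1)*(((p.1:ℝ)+p.2+2))^2)
      ≤ 4 / (((p.1:ℝ)+1)*(((p.1:ℝ)+p.2+2))^2) := by
        exact (div_le_div_iff_of_pos_right hd2).mpr hnum
    _ ≤ 4 * (1 / (((p.1:ℝ)+1)*((p.2:ℝ)+1)*((p.1:ℝ)+p.2+2))) := by
        rw [mul_one_div]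
        exact div_le_div_of_nonneg_left (by norm_num) hd hden

lemma BC_sub {y : ℝ} (hy : |y| ≤ 1) :
    (∑' m : ℕ, y^(m+1) * H (m+1)/((m:ℝ)+1)^2) - (∑' k : ℕ, y^(k+1) * H k /((k:ℝ)+1)^2)
    = ∑' k : ℕ, y^(k+1)/((k:ℝ)+1)^3 := by
  rw [← Summable.tsum_sub (summable_one_dim y hy (fun k => H (k+1)) w_H') (summable_one_dim y hy H w_H)]
  apply tsum_congr
  intro k
  rw [H_succ, div_sub_div_same,
    show y^(k+1) * (H k + 1/((k:ℝ)+1)) - y^(k+1) * H k = y^(k+1) * (1/((k:ℝ)+1)) by ring,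
    mul_one_div, div_div]
  congr 1
  ring

lemma sumL {y : ℝ} (hy : |y| ≤ 1) : Summable (fun k : ℕ => y^(k+1)/((k:ℝ)+1)^3) := by
  refine (summable_one_dim y hy (fun k => 1/((k:ℝ)+1)) w_inv).congr (fun k => ?_)
  rw [mul_one_div, div_div]
  congr 1
  ring

set_option maxHeartbeats 1600000 in
/-- The core identity. -/
lemma core {y : ℝ} (hy : |y| ≤ 1) :
    ∑' p : ℕ×ℕ, (1-y^(p.1+1))*(1-y^(p.2+1))/(((p.1:ℝ)+1)*(((p.1:ℝ)+p.2+2))^2)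
      = ∑' k : ℕ, (1-y^(k+1))/((k:ℝ)+1)^3 := by
  classical
  set u : ℕ×ℕ → ℝ :=
    fun p => (1-y^(p.1+1))*(1-y^(p.2+1))/(((p.1:ℝ)+1)*(((p.1:ℝ)+p.2+2))^2) with hu
  set t1 : ℕ×ℕ → ℝ := fun p => 1/(((p.1:ℝ)+1)*((p.2:ℝ)+1)*((p.1:ℝ)+p.2+2)) with ht1
  set t2 : ℕ×ℕ → ℝ := fun p => y^(p.1+1)/(((p.1:ℝ)+1)*((p.2:ℝ)+1)*((p.1:ℝ)+p.2+2)) with ht2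
  set t3 : ℕ×ℕ → ℝ := fun p => y^(p.2+1)/(((p.1:ℝ)+1)*((p.2:ℝ)+1)*((p.1:ℝ)+p.2+2)) with ht3
  set t4 : ℕ×ℕ → ℝ := fun p => y^(p.1+p.2+2)/(((p.1:ℝ)+1)*((p.2:ℝ)+1)*((p.1:ℝ)+p.2+2)) with ht4
  have su : Summable u := su_summable hy
  have st1 : Summable t1 := st_gen 1 (fun _ => 1) (by intro p; rw [abs_one])
  have st2 : Summable t2 := st_gen 1 _ (fun p => abs_ypow_le hy (p.1+1))
  have st3 : Summable t3 := st_gen 1 _ (fun p => abs_ypow_le hy (p.2+1))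
  have st4 : Summable t4 := st_gen 1 _ (fun p => abs_ypow_le hy (p.1+p.2+2))
  have susw : Summable (fun p : ℕ×ℕ => u (Prod.swap p)) :=
    ((Equiv.prodComm ℕ ℕ).summable_iff).2 su
  -- step: sum of u over swap is the same
  have hswap : ∑' p : ℕ×ℕ, u (Prod.swap p) = ∑' p, u p := (Equiv.prodComm ℕ ℕ).tsum_eq u
  -- step: pointwise u p + u p.swap = t1 - t2 - t3 + t4
  have hpt : ∀ p : ℕ×ℕ, u p + u (Prod.swap p) = t1 p - t2 p - t3 p + t4 p := by
    intro p
    simp only [hu, ht1, ht2, ht3, ht4, Prod.fst_swap, Prod.snd_swap]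
    have hab : y^(p.1+p.2+2) = y^(p.1+1) * y^(p.2+1) := by
      rw [← pow_add]; congr 1; omega
    have d1 : ((p.1:ℝ)+1) ≠ 0 := by positivity
    have d2 : ((p.2:ℝ)+1) ≠ 0 := by positivity
    have d3 : ((p.1:ℝ)+p.2+2) ≠ 0 := by positivity
    have d4 : ((p.2:ℝ)+p.1+2) ≠ 0 := by positivity
    rw [hab]
    field_simp
    ring
  -- left side: 2 ∑ u
  have h2u : ∑' p : ℕ×ℕ, (u p + u (Prod.swap p)) = 2 * ∑' p, u p := by
    rw [Summable.tsum_add su susw, hswap]; ring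
  -- right side: split into four sums
  have hsplit : ∑' p : ℕ×ℕ, (u p + u (Prod.swap p))
      = (∑' p, t1 p) - (∑' p, t2 p) - (∑' p, t3 p) + (∑' p, t4 p) := by
    rw [tsum_congr hpt, Summable.tsum_add ((st1.sub st2).sub st3) st4,
      Summable.tsum_sub (st1.sub st2) st3, Summable.tsum_sub st1 st2]
  -- t3 sums to the same as t2
  have ht32 : ∑' p, t3 p = ∑' p, t2 p := by
    have hpt32 : ∀ p : ℕ×ℕ, t3 p = t2 (Prod.swap p) := by
      intro p
      simp only [ht2, ht3, Prod.fst_swap, Prod.snd_swap]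
      congr 1
      ring
    rw [tsum_congr hpt32]
    exact (Equiv.prodComm ℕ ℕ).tsum_eq t2
  -- values of the pieces
  have hT2 : ∑' p, t2 p = ∑' m : ℕ, y^(m+1) * H (m+1)/((m:ℝ)+1)^2 := P_eq y hy st2
  have hT1 : ∑' p, t1 p = ∑' m : ℕ, (1:ℝ)^(m+1) * H (m+1)/((m:ℝ)+1)^2 := by
    have hs1 : Summable (fun p : ℕ×ℕ =>
        (1:ℝ)^(p.1+1)/(((p.1:ℝ)+1)*((p.2:ℝ)+1)*((p.1:ℝ)+p.2+2))) :=
      st1.congr (fun p => by rw [ht1, one_pow])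
    have := P_eq 1 (by norm_num) hs1
    rw [← this]
    exact tsum_congr (fun p => by rw [ht1, one_pow])
  have hT4 : ∑' p, t4 p = 2 * ∑' k : ℕ, y^(k+1) * H k /((k:ℝ)+1)^2 := by
    rw [ht4]
    rw [Q_eq y st4]
    congr 1
    have hsh := shift_eq y (summable_one_dim y hy H w_H)
    rw [← hsh]
  have hT1' : ∑' p, t1 p = 2 * ∑' k : ℕ, (1:ℝ)^(k+1) * H k /((k:ℝ)+1)^2 := by
    have hs1 : Summable (fun p : ℕ×ℕ =>
        (1:ℝ)^(p.1+p.2+2)/(((p.1:ℝ)+1)*((p.2:ℝ)+1)*((p.1:ℝ)+p.2+2))) :=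
      st1.congr (fun p => by rw [ht1, one_pow])
    have := Q_eq 1 hs1
    have h2 : ∑' p, t1 p = ∑' p : ℕ×ℕ,
        (1:ℝ)^(p.1+p.2+2)/(((p.1:ℝ)+1)*((p.2:ℝ)+1)*((p.1:ℝ)+p.2+2)) :=
      tsum_congr (fun p => by rw [ht1, one_pow])
    rw [h2, this]
    congr 1
    exact shift_eq 1 (summable_one_dim 1 (by norm_num) H w_H)
  -- notation for one–dimensional sums
  set By := ∑' m : ℕ, y^(m+1) * H (m+1)/((m:ℝ)+1)^2 with hBy
  set Cy := ∑' k : ℕ, y^(k+1) * H k /((k:ℝ)+1)^2 with hCy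
  set B1 := ∑' m : ℕ, (1:ℝ)^(m+1) * H (m+1)/((m:ℝ)+1)^2 with hB1
  set C1 := ∑' k : ℕ, (1:ℝ)^(k+1) * H k /((k:ℝ)+1)^2 with hC1
  set Ly := ∑' k : ℕ, y^(k+1)/((k:ℝ)+1)^3 with hLy
  set L1 := ∑' k : ℕ, (1:ℝ)^(k+1)/((k:ℝ)+1)^3 with hL1
  have hBCy : By - Cy = Ly := by
    have h := BC_sub hy
    rw [hBy, hCy, hLy]
    exact h
  have hBC1 : B1 - C1 = L1 := by
    have h := BC_sub (y := (1:ℝ)) (by norm_num)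
    rw [hB1, hC1, hL1]
    exact h
  have hB12 : B1 = 2 * C1 := by rw [← hT1, hT1']
  have hC1L1 : C1 = L1 := by linarith
  -- assemble
  have huval : ∑' p, u p = L1 - Ly := by
    linarith [h2u, hsplit, ht32, hT1, hT2, hT4]
  rw [huval]
  rw [← Summable.tsum_sub (sumL (y := 1) (by norm_num)) (sumL hy)]
  apply tsum_congr
  intro k
  rw [one_pow]
  ring

end Core

end FibAux

open FibAux in
/-- sum formula for a double series involving Fibonacci numbers. -/
theorem fibonacci_double_series_sum_formula :
    Summable (fun p : ℕ × ℕ =>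
      (goldenAlpha⁻¹ ^ (p.1 + 1) * (Nat.fib (p.1 + 1) : ℝ)
        + goldenAlpha⁻¹ ^ (p.2 + 1) * (Nat.fib (p.2 + 1) : ℝ)
        - goldenAlpha⁻¹ ^ ((p.1 + 1) + (p.2 + 1)) * (Nat.fib ((p.1 + 1) + (p.2 + 1)) : ℝ))
      / ((p.1 + 1 : ℝ) * ((p.1 + 1 : ℝ) + (p.2 + 1 : ℝ)) ^ 2)) ∧
    Summable (fun m : ℕ =>
      goldenAlpha⁻¹ ^ (m + 1) * (Nat.fib (m + 1) : ℝ) / (m + 1 : ℝ) ^ 3) ∧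
    (∑' p : ℕ × ℕ,
      (goldenAlpha⁻¹ ^ (p.1 + 1) * (Nat.fib (p.1 + 1) : ℝ)
        + goldenAlpha⁻¹ ^ (p.2 + 1) * (Nat.fib (p.2 + 1) : ℝ)
        - goldenAlpha⁻¹ ^ ((p.1 + 1) + (p.2 + 1)) * (Nat.fib ((p.1 + 1) + (p.2 + 1)) : ℝ))
      / ((p.1 + 1 : ℝ) * ((p.1 + 1 : ℝ) + (p.2 + 1 : ℝ)) ^ 2))
    = ∑' m : ℕ, goldenAlpha⁻¹ ^ (m + 1) * (Nat.fib (m + 1) : ℝ) / (m + 1 : ℝ) ^ 3 := by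
  have hy : |yv| ≤ 1 := yv_abs
  have h5 : Real.sqrt 5 ≠ 0 := ne_of_gt sqrt5_pos
  have hterm : ∀ p : ℕ × ℕ,
      (goldenAlpha⁻¹ ^ (p.1 + 1) * (Nat.fib (p.1 + 1) : ℝ)
        + goldenAlpha⁻¹ ^ (p.2 + 1) * (Nat.fib (p.2 + 1) : ℝ)
        - goldenAlpha⁻¹ ^ ((p.1 + 1) + (p.2 + 1)) * (Nat.fib ((p.1 + 1) + (p.2 + 1)) : ℝ))
      / ((p.1 + 1 : ℝ) * ((p.1 + 1 : ℝ) + (p.2 + 1 : ℝ)) ^ 2)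
      = (1/Real.sqrt 5) *
        ((1-yv^(p.1+1))*(1-yv^(p.2+1))/(((p.1:ℝ)+1)*(((p.1:ℝ)+p.2+2))^2)) := by
    intro p
    have he : (p.1 + 1) + (p.2 + 1) = p.1 + p.2 + 2 := by omega
    rw [he, binet, binet, binet]
    have hab : yv^(p.1+p.2+2) = yv^(p.1+1) * yv^(p.2+1) := by
      rw [← pow_add]; congr 1; omega
    have d1 : ((p.1:ℝ)+1) ≠ 0 := by positivity
    have d3 : ((p.1:ℝ)+p.2+2) ≠ 0 := by positivity
    have hcast : ((p.1:ℝ)+1) + ((p.2:ℝ)+1) = (p.1:ℝ)+p.2+2 := by ring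
    rw [hab, hcast]
    field_simp
    ring
  have hrhs : ∀ m : ℕ,
      goldenAlpha⁻¹ ^ (m + 1) * (Nat.fib (m + 1) : ℝ) / (m + 1 : ℝ) ^ 3
      = (1/Real.sqrt 5) * ((1-yv^(m+1))/((m:ℝ)+1)^3) := by
    intro m
    rw [binet]
    ring
  have hsum1 : Summable (fun k : ℕ => (1-yv^(k+1))/((k:ℝ)+1)^3) := by
    have h := (sumL (y := (1:ℝ)) (by norm_num)).sub (sumL hy)
    refine h.congr (fun k => ?_)
    rw [one_pow, div_sub_div_same]
  refine ⟨?_, ?_, ?_⟩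
  · exact ((su_summable hy).mul_left (1/Real.sqrt 5)).congr (fun p => (hterm p).symm)
  · exact (hsum1.mul_left (1/Real.sqrt 5)).congr (fun m => (hrhs m).symm)
  · rw [tsum_congr hterm, tsum_congr hrhs, tsum_mul_left, tsum_mul_left, core hy]
end

section
/- Let r ≥ 1 and let s_1, …, s_r ∈ ℂ satisfy Re(s_{r−k+1} + ⋯ + s_r) > k for every k with 1 ≤ k ≤ r. Then the Euler–Zagier r-fold series ∑_{m_1=1}^∞ ⋯ ∑_{m_r=1}^∞ m_1^{-s_1} (m_1+m_2)^{-s_2} ⋯ (m_1+⋯+m_r)^{-s_r} converges absolutely. -/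
open scoped BigOperators

/-- The partial sum `m_1 + ⋯ + m_{i+1}` (with each variable shifted to be `≥ 1`). -/
def partialSum {r : ℕ} (m : Fin r → ℕ) (i : Fin r) : ℕ :=
  ∑ k ∈ Finset.Iic i, (m k + 1)

set_option maxHeartbeats 1000000 in
/-- Summability of a product of summable nonnegative functions over a Pi type. -/
lemma summable_pi_prod {g : ℕ → ℝ} (hg0 : ∀ n, 0 ≤ g n) (hg : Summable g) :
    ∀ r : ℕ, Summable (fun m : Fin r → ℕ => ∏ i, g (m i)) := by
  intro r
  induction r with
  | zero => exact Summable.of_finite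
  | succ n ih =>
      have h1 : (0 : ℕ → ℝ) ≤ g := hg0
      have h2 : (0 : (Fin n → ℕ) → ℝ) ≤ fun m => ∏ i, g (m i) :=
        fun m => Finset.prod_nonneg fun i _ => hg0 _
      have h := hg.mul_of_nonneg ih h1 h2
      rw [← (Fin.consEquiv (fun _ : Fin (n + 1) => ℕ)).summable_iff]
      refine h.congr fun p => ?_
      simp only [Function.comp_apply, Fin.consEquiv_apply]
      rw [Fin.prod_univ_succ]
      simp

/-- the Euler–Zagier `r`-fold zeta series converges absolutely when
`Re(s_{r−k+1} + ⋯ + s_r) > k` for every `1 ≤ k ≤ r`. -/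
theorem eulerZagier_abs_convergence
    (r : ℕ) (hr : 1 ≤ r) (s : Fin r → ℂ)
    (hs : ∀ k : ℕ, 1 ≤ k → k ≤ r →
      (k : ℝ) < ∑ i ∈ Finset.univ.filter (fun i : Fin r => r - k ≤ (i : ℕ)), (s i).re) :
    Summable (fun m : Fin r → ℕ =>
      ‖∏ i : Fin r, ((partialSum m i : ℕ) : ℂ) ^ (-(s i))‖) := by
  classical
  set σ : Fin r → ℝ := fun i => (s i).re with hσ
  set A : ℕ → Finset (Fin r) :=
    fun k => Finset.univ.filter (fun i : Fin r => r - k ≤ (i : ℕ)) with hA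
  set T : ℕ → ℝ := fun k => ∑ i ∈ A k, σ i with hT
  have hTk : ∀ k : ℕ, 1 ≤ k → k ≤ r → (k : ℝ) < T k := fun k h1 h2 => hs k h1 h2
  -- choose ε > 0 with k * (1 + ε/r) ≤ T k for all 1 ≤ k ≤ r
  obtain ⟨ε, hε0, hεT⟩ : ∃ ε : ℝ, 0 < ε ∧ ∀ k : ℕ, 1 ≤ k → k ≤ r →
      (k : ℝ) * (1 + ε / r) ≤ T k := by
    have hne : (Finset.Icc 1 r).Nonempty := ⟨1, by simp [hr]⟩
    set c := (Finset.Icc 1 r).inf' hne (fun k => T k - k) with hc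
    have hc0 : 0 < c := by
      rw [hc, Finset.lt_inf'_iff]
      intro j hj
      simp only [Finset.mem_Icc] at hj
      have := hTk j hj.1 hj.2
      linarith
    refine ⟨c, hc0, fun k hk1 hk2 => ?_⟩
    have hinf : c ≤ T k - k := Finset.inf'_le _ (by simp [hk1, hk2])
    have hkr : (k : ℝ) ≤ r := by exact_mod_cast hk2
    have hr0 : (0 : ℝ) < r := by exact_mod_cast hr
    have hεk : (k : ℝ) * (c / r) ≤ c := by
      rw [mul_div_assoc', div_le_iff₀ hr0]
      nlinarith
    nlinarith
  set e : ℝ := 1 + ε / r with he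
  have hre : (0 : ℝ) < r := by exact_mod_cast hr
  have he1 : 1 < e := by
    have : 0 < ε / r := div_pos hε0 hre
    rw [he]; linarith
  -- pointwise key inequality
  have key : ∀ m : Fin r → ℕ,
      ∏ i : Fin r, ((partialSum m i : ℕ) : ℝ) ^ (-(σ i))
        ≤ ∏ i : Fin r, ((m i : ℝ) + 1) ^ (-e) := by
    intro m
    have hps : ∀ i : Fin r, m i + 1 ≤ partialSum m i := by
      intro i
      exact Finset.single_le_sum (f := fun k => m k + 1)
        (fun k _ => Nat.zero_le _) (Finset.mem_Iic.2 (le_refl i))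
    set M : Fin r → ℝ := fun i => ((partialSum m i : ℕ) : ℝ) with hM
    have hM1 : ∀ i, 1 ≤ M i := by
      intro i
      show (1 : ℝ) ≤ ((partialSum m i : ℕ) : ℝ)
      have := hps i
      exact_mod_cast by omega
    have hM0 : ∀ i, 0 < M i := fun i => lt_of_lt_of_le one_pos (hM1 i)
    have hMn : ∀ i, (m i : ℝ) + 1 ≤ M i := by
      intro i
      show (m i : ℝ) + 1 ≤ ((partialSum m i : ℕ) : ℝ)
      exact_mod_cast hps i
    have hMmono : ∀ i j : Fin r, i ≤ j → M i ≤ M j := by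
      intro i j hij
      show ((partialSum m i : ℕ) : ℝ) ≤ ((partialSum m j : ℕ) : ℝ)
      have : partialSum m i ≤ partialSum m j :=
        Finset.sum_le_sum_of_subset (Finset.Iic_subset_Iic.2 hij)
      exact_mod_cast this
    -- "previous" partial sum (1 at the left edge)
    set P : ℕ → ℝ := fun d => if h : d < r then M ⟨r - d - 1, by omega⟩ else 1 with hP
    have hP1 : ∀ d, 1 ≤ P d := by
      intro d
      show (1 : ℝ) ≤ if h : d < r then M ⟨r - d - 1, by omega⟩ else 1
      by_cases h : d < r
      · simp only [dif_pos h]; exact hM1 _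
      · simp only [dif_neg h]; exact le_rfl
    have hP0 : ∀ d, 0 < P d := fun d => lt_of_lt_of_le one_pos (hP1 d)
    -- main downward induction
    have claim : ∀ d, d ≤ r →
        ∏ i ∈ A d, M i ^ (-(σ i))
          ≤ P d ^ ((d : ℝ) * e - T d) * ∏ i ∈ A d, ((m i : ℝ) + 1) ^ (-e) := by
      intro d
      induction d with
      | zero =>
          intro _
          have hA0 : A 0 = ∅ := by
            show Finset.univ.filter (fun i : Fin r => r - 0 ≤ (i : ℕ)) = ∅
            ext i
            simp only [Finset.mem_filter, Finset.mem_univ, true_and,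
              Finset.notMem_empty, iff_false]
            have := i.2
            omega
          have hT0 : T 0 = 0 := by
            show ∑ i ∈ A 0, σ i = 0
            rw [hA0, Finset.sum_empty]
          rw [hA0, hT0]
          simp
      | succ d ih =>
          intro hdr
          have hd : d < r := by omega
          set i₀ : Fin r := ⟨r - d - 1, by omega⟩ with hi₀
          have hins : A (d + 1) = insert i₀ (A d) := by
            show Finset.univ.filter (fun i : Fin r => r - (d + 1) ≤ (i : ℕ))
              = insert i₀ (Finset.univ.filter (fun i : Fin r => r - d ≤ (i : ℕ)))
            ext i
            simp only [Finset.mem_filter, Finset.mem_univ, true_and, Finset.mem_insert,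
              Fin.ext_iff, hi₀]
            have := i.2
            omega
          have hnotmem : i₀ ∉ A d := by
            show i₀ ∉ Finset.univ.filter (fun i : Fin r => r - d ≤ (i : ℕ))
            simp only [Finset.mem_filter, Finset.mem_univ, true_and, hi₀]
            omega
          have hPd : P d = M i₀ := by
            show (if h : d < r then M ⟨r - d - 1, by omega⟩ else 1) = M i₀
            simp only [dif_pos hd, hi₀]
          have hTsucc : T (d + 1) = σ i₀ + T d := by
            show ∑ i ∈ A (d + 1), σ i = σ i₀ + ∑ i ∈ A d, σ i
            rw [hins, Finset.sum_insert hnotmem]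
          have hPsucc : P (d + 1) ≤ M i₀ := by
            show (if h : d + 1 < r then M ⟨r - (d + 1) - 1, by omega⟩ else 1) ≤ M i₀
            by_cases h : d + 1 < r
            · simp only [dif_pos h]
              exact hMmono _ _ (by simp only [Fin.le_def, hi₀]; omega)
            · simp only [dif_neg h]; exact hM1 _
          have hexp : (↑(d + 1) : ℝ) * e - T (d + 1) ≤ 0 := by
            have := hεT (d + 1) (by omega) hdr
            linarith
          have hexpeq : -(σ i₀) + ((d : ℝ) * e - T d)
              = -e + ((↑(d + 1) : ℝ) * e - T (d + 1)) := by
            rw [hTsucc]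
            push_cast
            ring
          rw [hins, Finset.prod_insert hnotmem, Finset.prod_insert hnotmem]
          calc M i₀ ^ (-(σ i₀)) * ∏ i ∈ A d, M i ^ (-(σ i))
              ≤ M i₀ ^ (-(σ i₀)) *
                (P d ^ ((d : ℝ) * e - T d) * ∏ i ∈ A d, ((m i : ℝ) + 1) ^ (-e)) := by
                apply mul_le_mul_of_nonneg_left (ih (by omega))
                exact Real.rpow_nonneg (le_of_lt (hM0 i₀)) _
            _ = (M i₀ ^ (-e) * M i₀ ^ ((↑(d + 1) : ℝ) * e - T (d + 1))) *
                ∏ i ∈ A d, ((m i : ℝ) + 1) ^ (-e) := by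
                rw [hPd, ← mul_assoc, ← Real.rpow_add (hM0 i₀), ← Real.rpow_add (hM0 i₀),
                  hexpeq]
            _ ≤ (((m i₀ : ℝ) + 1) ^ (-e) * P (d + 1) ^ ((↑(d + 1) : ℝ) * e - T (d + 1))) *
                ∏ i ∈ A d, ((m i : ℝ) + 1) ^ (-e) := by
                apply mul_le_mul_of_nonneg_right
                · apply mul_le_mul
                  · exact Real.rpow_le_rpow_of_nonpos
                      (by positivity) (hMn i₀) (by linarith)
                  · exact Real.rpow_le_rpow_of_nonpos (hP0 _) hPsucc hexp
                  · exact Real.rpow_nonneg (le_of_lt (hM0 i₀)) _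
                  · exact Real.rpow_nonneg (by positivity) _
                · exact Finset.prod_nonneg fun i _ => Real.rpow_nonneg (by positivity) _
            _ = P (d + 1) ^ ((↑(d + 1) : ℝ) * e - T (d + 1)) *
                (((m i₀ : ℝ) + 1) ^ (-e) * ∏ i ∈ A d, ((m i : ℝ) + 1) ^ (-e)) := by ring
    have hclaim := claim r (le_refl r)
    have hAr : A r = Finset.univ := by
      show Finset.univ.filter (fun i : Fin r => r - r ≤ (i : ℕ)) = Finset.univ
      ext i
      simp only [Finset.mem_filter, Finset.mem_univ, true_and, iff_true]
      omega
    have hPr : P r = 1 := by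
      show (if h : r < r then M ⟨r - r - 1, by omega⟩ else 1) = 1
      simp
    rw [hAr, hPr, Real.one_rpow, one_mul] at hclaim
    exact hclaim
  -- summable majorant
  have hmaj : Summable (fun m : Fin r → ℕ => ∏ i : Fin r, ((m i : ℝ) + 1) ^ (-e)) := by
    have hg : Summable (fun n : ℕ => ((n : ℝ) + 1) ^ (-e)) := by
      have h1 : Summable (fun n : ℕ => (n : ℝ) ^ (-e)) :=
        Real.summable_nat_rpow.2 (by linarith)
      have h2 := h1.comp_injective (add_left_injective (a := 1))
      refine h2.congr fun n => ?_
      simp only [Function.comp]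
      push_cast
      ring_nf
    exact summable_pi_prod (fun n => Real.rpow_nonneg (by positivity) _) hg r
  -- compare
  apply Summable.of_nonneg_of_le (fun m => norm_nonneg _) _ hmaj
  intro m
  have hnorm : ‖∏ i : Fin r, ((partialSum m i : ℕ) : ℂ) ^ (-(s i))‖
      = ∏ i : Fin r, ((partialSum m i : ℕ) : ℝ) ^ (-(σ i)) := by
    rw [norm_prod]
    apply Finset.prod_congr rfl
    intro i _
    have hps : m i + 1 ≤ partialSum m i :=
      Finset.single_le_sum (f := fun k => m k + 1)
        (fun k _ => Nat.zero_le _) (Finset.mem_Iic.2 (le_refl i))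
    have hpos : (0 : ℝ) < ((partialSum m i : ℕ) : ℝ) := by
      have : 1 ≤ partialSum m i := by omega
      exact_mod_cast Nat.lt_of_lt_of_le Nat.zero_lt_one this
    rw [show ((partialSum m i : ℕ) : ℂ)
        = (((partialSum m i : ℕ) : ℝ) : ℂ) by push_cast; ring,
      Complex.norm_cpow_eq_rpow_re_of_pos hpos]
    simp [hσ]
  rw [hnorm]
  exact key m
end
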